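/- Let w : [0,∞) → ℝ be bounded with |w(t)| ≤ w*, and suppose w satisfies: (i) on every interval where w is continuous, |w(s) − w(p)| ≤ c|s − p|; (ii) there exist contiguous intervals [s_j, s_{j+1}) covering [0,∞) on which w is continuous, with jump bound |w(s_j⁺) − w(s_j⁻)| ≤ ĉ|s_{j−1} − s_j| for all j ≥ 1. Then for every T > 0 and every ε > 0 there exists η > 0 such that for all r ≥ 0 and all 0 < h ≤ η, ∫₀^{T−h} |w(r+t) − w(r+t+h)| dt ≤ ε; i.e., the shift-continuity in L¹ holds uniformly over the translates of w. -/

import Mathlib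

set_option maxHeartbeats 1000000


open MeasureTheory Set intervalIntegral Filter

theorem stmt_18 (w : ℝ → ℝ) (wstar : ℝ) (hbdd : ∀ t : ℝ, |w t| ≤ wstar)
    (c chat : ℝ) (hc : 0 < c) (hchat : 0 < chat)
    (s : ℕ → ℝ) (hs0 : s 0 = 0) (hmono : StrictMono s)
    (htop : Filter.Tendsto s Filter.atTop Filter.atTop)
    (hlip : ∀ j : ℕ, ∀ t₁ ∈ Set.Ico (s j) (s (j+1)), ∀ t₂ ∈ Set.Ico (s j) (s (j+1)),
      |w t₁ - w t₂| ≤ c * |t₁ - t₂|)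
    (hjump : ∀ j : ℕ, ∃ Lj : ℝ,
      Filter.Tendsto w (nhdsWithin (s (j+1)) (Set.Iio (s (j+1)))) (nhds Lj) ∧
      |w (s (j+1)) - Lj| ≤ chat * (s (j+1) - s j)) :
    ∀ T : ℝ, 0 < T → ∀ ε : ℝ, 0 < ε → ∃ η : ℝ, 0 < η ∧
      ∀ r : ℝ, 0 ≤ r → ∀ h : ℝ, 0 < h → h ≤ η →
        (∫ t in (0:ℝ)..(T - h), |w (r + t) - w (r + t + h)|) ≤ ε := by
  classical
  choose L hLlim hLjump using hjump
  have hwstar : 0 ≤ wstar := le_trans (abs_nonneg _) (hbdd 0)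
  have hex : ∀ x : ℝ, ∃ n, x < s n := fun x =>
    (htop.eventually (eventually_gt_atTop x)).exists
  set m : ℝ → ℕ := fun x => Nat.find (hex x) with hm
  have hms : ∀ x, x < s (m x) := fun x => Nat.find_spec (hex x)
  have hml : ∀ x, ∀ k, k < m x → s k ≤ x := fun x k hk => not_lt.1 (Nat.find_min (hex x) hk)
  have hmmin : ∀ x n, x < s n → m x ≤ n := fun x n hn => Nat.find_min' (hex x) hn
  have hm1 : ∀ x, 0 ≤ x → 1 ≤ m x := by
    intro x hx
    by_contra hcon
    have h0 : m x = 0 := by omega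
    have h1 := hms x
    rw [h0, hs0] at h1
    linarith
  have hprev : ∀ x, 0 ≤ x → s (m x - 1) ≤ x := by
    intro x hx
    exact hml x _ (by have := hm1 x hx; omega)
  have hmmono : ∀ x y : ℝ, x ≤ y → m x ≤ m y := fun x y hxy =>
    hmmin x _ (lt_of_le_of_lt hxy (hms y))
  -- bound on the limits
  have hLbdd : ∀ j, |L j| ≤ wstar := by
    intro j
    exact le_of_tendsto ((hLlim j).abs) (Eventually.of_forall fun t => hbdd t)
  -- Lipschitz up to the left limit
  have hleftLip : ∀ j : ℕ, ∀ t₁ ∈ Set.Ico (s j) (s (j+1)), |w t₁ - L j| ≤ c * (s (j+1) - t₁) := by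
    intro j t₁ ht₁
    have htend : Tendsto (fun t₂ => |w t₁ - w t₂|)
        (nhdsWithin (s (j+1)) (Set.Iio (s (j+1)))) (nhds |w t₁ - L j|) :=
      (tendsto_const_nhds.sub (hLlim j)).abs
    refine le_of_tendsto htend ?_
    filter_upwards [Ioo_mem_nhdsLT_of_mem (show s (j+1) ∈ Set.Ioc t₁ (s (j+1)) from
      ⟨ht₁.2, le_refl _⟩)] with t₂ ht₂
    have h1 : t₂ ∈ Set.Ico (s j) (s (j+1)) := ⟨le_trans ht₁.1 ht₂.1.le, ht₂.2⟩
    calc |w t₁ - w t₂| ≤ c * |t₁ - t₂| := hlip j t₁ ht₁ t₂ h1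
      _ ≤ c * (s (j+1) - t₁) := by
          apply mul_le_mul_of_nonneg_left _ hc.le
          rw [abs_le]
          constructor <;> [linarith [ht₂.1, ht₂.2]; linarith [ht₂.1, ht₂.2]]
  -- jump sizes
  set J : ℕ → ℝ := fun i => |w (s i) - L (i - 1)| with hJ
  have hJ0 : ∀ i, 0 ≤ J i := fun i => abs_nonneg _
  have hJchat : ∀ i, 1 ≤ i → J i ≤ chat * (s i - s (i - 1)) := by
    intro i hi
    have := hLjump (i - 1)
    have hi1 : i - 1 + 1 = i := by omega
    rw [hi1] at this
    exact this
  have hJw : ∀ i, J i ≤ 2 * wstar := by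
    intro i
    calc J i ≤ |w (s i)| + |L (i-1)| := abs_sub _ _
      _ ≤ 2 * wstar := by linarith [hbdd (s i), hLbdd (i-1)]
  -- key pointwise estimate
  have key : ∀ k : ℕ, ∀ x y : ℝ, 0 ≤ x → x ≤ y → m y = m x + k →
      |w x - w y| ≤ c * (y - x) + ∑ i ∈ Finset.Ico (m x) (m y), J i := by
    intro k
    induction k with
    | zero =>
      intro x y hx hxy hmy
      rw [hmy]
      simp only [Nat.add_zero, Finset.Ico_self, Finset.sum_empty, add_zero]
      have hj1 : m x - 1 + 1 = m x := by have := hm1 x hx; omega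
      have hxmem : x ∈ Set.Ico (s (m x - 1)) (s (m x - 1 + 1)) := by
        rw [hj1]; exact ⟨hprev x hx, hms x⟩
      have hymem : y ∈ Set.Ico (s (m x - 1)) (s (m x - 1 + 1)) := by
        rw [hj1]
        refine ⟨le_trans (hprev x hx) hxy, ?_⟩
        have := hms y
        rw [hmy, Nat.add_zero] at this
        exact this
      calc |w x - w y| ≤ c * |x - y| := hlip _ x hxmem y hymem
        _ = c * (y - x) := by rw [abs_sub_comm, abs_of_nonneg (by linarith)]
    | succ k ih =>
      intro x y hx hxy hmy
      have hj1 : 1 ≤ m x := hm1 x hx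
      have hxz : x < s (m x) := hms x
      have hzy : s (m x) ≤ y := hml y (m x) (by omega)
      have hz0 : 0 ≤ s (m x) := by
        rw [← hs0]; exact hmono.monotone (Nat.zero_le _)
      have hmz : m (s (m x)) = m x + 1 := by
        have hle : m (s (m x)) ≤ m x + 1 := hmmin _ _ (hmono (Nat.lt_succ_self _))
        have hge : ¬ m (s (m x)) ≤ m x := by
          intro hcon
          have := hms (s (m x))
          have h2 : s (m (s (m x))) ≤ s (m x) := hmono.monotone hcon
          linarith
        omega
      have hmy' : m y = m (s (m x)) + k := by omega
      have hIH := ih (s (m x)) y hz0 hzy hmy'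
      have hxl : x ∈ Set.Ico (s (m x - 1)) (s (m x - 1 + 1)) := by
        rw [show m x - 1 + 1 = m x by omega]
        exact ⟨hprev x hx, hxz⟩
      have h1 : |w x - L (m x - 1)| ≤ c * (s (m x - 1 + 1) - x) := hleftLip _ x hxl
      rw [show m x - 1 + 1 = m x by omega] at h1
      have hJj : |w (s (m x)) - L (m x - 1)| = J (m x) := rfl
      have htri : |w x - w y| ≤ |w x - L (m x - 1)| + J (m x) + |w (s (m x)) - w y| := by
        rw [← hJj]
        calc |w x - w y| = |(w x - L (m x - 1)) - (w (s (m x)) - L (m x - 1)) + (w (s (m x)) - w y)| := by ring_nf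
          _ ≤ |(w x - L (m x - 1)) - (w (s (m x)) - L (m x - 1))| + |w (s (m x)) - w y| := abs_add_le _ _
          _ ≤ |w x - L (m x - 1)| + |w (s (m x)) - L (m x - 1)| + |w (s (m x)) - w y| := by
              linarith [abs_sub (w x - L (m x - 1)) (w (s (m x)) - L (m x - 1))]
      have hsplit : ∑ i ∈ Finset.Ico (m x) (m y), J i
          = J (m x) + ∑ i ∈ Finset.Ico (m x + 1) (m y), J i := by
        exact Finset.sum_eq_sum_Ico_succ_bot (by omega) J
      rw [hsplit]
      rw [hmz] at hIH
      linarith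
  -- main argument
  intro T hT ε hε
  set D : ℝ := c * T + chat * T + 2 * wstar with hD
  have hDpos : 0 < D := by
    have := mul_pos hc hT
    have := mul_pos hchat hT
    simp only [hD]; linarith
  refine ⟨ε / D, div_pos hε hDpos, ?_⟩
  intro r hr h hh hhη
  set M : ℝ := T - h with hM
  rcases lt_or_ge M 0 with hM0 | hM0
  · rw [intervalIntegral.integral_symm]
    have hnn : 0 ≤ ∫ t in M..(0:ℝ), |w (r + t) - w (r + t + h)| :=
      intervalIntegral.integral_nonneg hM0.le (fun u _ => abs_nonneg _)
    linarith
  by_cases hint : IntervalIntegrable (fun t => |w (r + t) - w (r + t + h)|) volume 0 M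
  swap
  · rw [intervalIntegral.integral_undef hint]
    exact hε.le
  set F : Finset ℕ := Finset.Ico (m r) (m (r + T)) with hF
  set g : ℝ → ℝ := fun t => c * h +
    ∑ i ∈ F, J i * (Set.Ico (s i - h - r) (s i - r)).indicator (fun _ => (1:ℝ)) t with hg
  have hIntInd : ∀ i : ℕ, Integrable
      ((Set.Ico (s i - h - r) (s i - r)).indicator (fun _ => (1:ℝ))) volume := by
    intro i
    rw [integrable_indicator_iff measurableSet_Ico]
    exact integrableOn_const measure_Ico_lt_top.ne
  have hindint : ∀ i : ℕ, IntervalIntegrable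
      (fun t => (Set.Ico (s i - h - r) (s i - r)).indicator (fun _ => (1:ℝ)) t) volume 0 M :=
    fun i => (hIntInd i).intervalIntegrable
  have hsumInt : IntervalIntegrable (fun t => ∑ i ∈ F,
      J i * (Set.Ico (s i - h - r) (s i - r)).indicator (fun _ => (1:ℝ)) t) volume 0 M :=
    (integrable_finset_sum F (fun i _ => (hIntInd i).const_mul (J i))).intervalIntegrable
  have hgint : IntervalIntegrable g volume 0 M :=
    intervalIntegrable_const.add hsumInt
  have hpt : ∀ t ∈ Set.Icc (0:ℝ) M, |w (r + t) - w (r + t + h)| ≤ g t := by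
    intro t ht
    have hx0 : 0 ≤ r + t := by linarith [ht.1]
    have hxy : r + t ≤ r + t + h := by linarith
    have hmle : m (r + t) ≤ m (r + t + h) := hmmono _ _ hxy
    have hkey := key (m (r + t + h) - m (r + t)) (r + t) (r + t + h) hx0 hxy (by omega)
    have hsum : ∑ i ∈ Finset.Ico (m (r + t)) (m (r + t + h)), J i
        ≤ ∑ i ∈ F, J i * (Set.Ico (s i - h - r) (s i - r)).indicator (fun _ => (1:ℝ)) t := by
      have hsub : Finset.Ico (m (r + t)) (m (r + t + h)) ⊆ F := by
        apply Finset.Ico_subset_Ico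
        · exact hmmono r (r + t) (by linarith [ht.1])
        · exact hmmono (r + t + h) (r + T) (by simp only [hM] at ht; linarith [ht.2])
      have heq : ∀ i ∈ Finset.Ico (m (r + t)) (m (r + t + h)),
          J i = J i * (Set.Ico (s i - h - r) (s i - r)).indicator (fun _ => (1:ℝ)) t := by
        intro i hi
        rw [Finset.mem_Ico] at hi
        have h1 : r + t < s i := lt_of_lt_of_le (hms (r + t)) (hmono.monotone hi.1)
        have h2 : s i ≤ r + t + h := hml _ i hi.2
        rw [Set.indicator_of_mem (by constructor <;> [linarith; linarith]) (fun _ => (1:ℝ)), mul_one]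
      calc ∑ i ∈ Finset.Ico (m (r + t)) (m (r + t + h)), J i
          = ∑ i ∈ Finset.Ico (m (r + t)) (m (r + t + h)),
              J i * (Set.Ico (s i - h - r) (s i - r)).indicator (fun _ => (1:ℝ)) t :=
            Finset.sum_congr rfl heq
        _ ≤ ∑ i ∈ F, J i * (Set.Ico (s i - h - r) (s i - r)).indicator (fun _ => (1:ℝ)) t := by
            apply Finset.sum_le_sum_of_subset_of_nonneg hsub
            intro i _ _
            exact mul_nonneg (hJ0 i) (Set.indicator_nonneg (fun _ _ => zero_le_one) t)
    simp only [hg]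
    have : c * (r + t + h - (r + t)) = c * h := by ring_nf
    linarith [hkey, hsum, this.symm.le]
  have hindle : ∀ i : ℕ,
      (∫ t in (0:ℝ)..M, (Set.Ico (s i - h - r) (s i - r)).indicator (fun _ => (1:ℝ)) t) ≤ h := by
    intro i
    rw [intervalIntegral.integral_of_le hM0,
      MeasureTheory.setIntegral_indicator measurableSet_Ico]
    rw [MeasureTheory.setIntegral_const, smul_eq_mul, mul_one]
    have hsub : volume (Set.Ioc 0 M ∩ Set.Ico (s i - h - r) (s i - r))
        ≤ volume (Set.Ico (s i - h - r) (s i - r)) := measure_mono Set.inter_subset_right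
    have hvol : volume (Set.Ico (s i - h - r) (s i - r)) = ENNReal.ofReal h := by
      rw [Real.volume_Ico]; congr 1; ring
    calc (volume (Set.Ioc 0 M ∩ Set.Ico (s i - h - r) (s i - r))).toReal
        ≤ (ENNReal.ofReal h).toReal := by
          apply ENNReal.toReal_mono (by simp)
          rw [← hvol]; exact hsub
      _ = h := ENNReal.toReal_ofReal hh.le
  have hsumJ : ∑ i ∈ F, J i ≤ 2 * wstar + chat * T := by
    rcases le_or_gt (m (r + T)) (m r) with hab | hab
    · rw [hF, Finset.Ico_eq_empty (by omega), Finset.sum_empty]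
      have := mul_pos hchat hT
      linarith
    · have tel : ∀ (a b : ℕ), a ≤ b → ∑ i ∈ Finset.Ico (a+1) (b+1), (s i - s (i-1)) = s b - s a := by
        intro a b hab'
        induction b, hab' using Nat.le_induction with
        | base => simp
        | succ n hn ih =>
          rw [Finset.sum_Ico_succ_top (by omega), ih]
          simp only [Nat.add_sub_cancel]
          ring
      set a := m r with ha
      set b := m (r + T) with hb
      rw [hF, Finset.sum_eq_sum_Ico_succ_bot hab J]
      have hb1 : b - 1 + 1 = b := by omega
      have htel : ∑ i ∈ Finset.Ico (a+1) b, (s i - s (i-1)) = s (b-1) - s a := by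
        rw [← hb1]
        exact tel a (b-1) (by omega)
      have hs1 : ∑ i ∈ Finset.Ico (a+1) b, J i ≤ ∑ i ∈ Finset.Ico (a+1) b, chat * (s i - s (i-1)) := by
        apply Finset.sum_le_sum
        intro i hi
        rw [Finset.mem_Ico] at hi
        exact hJchat i (by omega)
      rw [← Finset.mul_sum, htel] at hs1
      have hsb : s (b - 1) ≤ r + T := hml _ _ (by omega)
      have hsa : r < s a := hms r
      have : chat * (s (b-1) - s a) ≤ chat * T := by
        apply mul_le_mul_of_nonneg_left (by linarith) hchat.le
      linarith [hJw a]
  -- assemble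
  have hstep1 : (∫ t in (0:ℝ)..M, |w (r + t) - w (r + t + h)|) ≤ ∫ t in (0:ℝ)..M, g t :=
    intervalIntegral.integral_mono_on hM0 hint hgint hpt
  have hstep2 : (∫ t in (0:ℝ)..M, g t)
      = c * h * M + ∑ i ∈ F, J i * ∫ t in (0:ℝ)..M,
          (Set.Ico (s i - h - r) (s i - r)).indicator (fun _ => (1:ℝ)) t := by
    have e1 : (∫ t in (0:ℝ)..M, g t)
        = (∫ _t in (0:ℝ)..M, c * h) + ∫ t in (0:ℝ)..M, ∑ i ∈ F,
            J i * (Set.Ico (s i - h - r) (s i - r)).indicator (fun _ => (1:ℝ)) t :=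
      intervalIntegral.integral_add intervalIntegrable_const hsumInt
    have e2 : (∫ t in (0:ℝ)..M, ∑ i ∈ F,
        J i * (Set.Ico (s i - h - r) (s i - r)).indicator (fun _ => (1:ℝ)) t)
        = ∑ i ∈ F, ∫ t in (0:ℝ)..M,
            J i * (Set.Ico (s i - h - r) (s i - r)).indicator (fun _ => (1:ℝ)) t :=
      intervalIntegral.integral_finset_sum (fun i _ => (hindint i).const_mul (J i))
    rw [e1, e2, intervalIntegral.integral_const]
    congr 1
    · rw [smul_eq_mul]; ring
    · apply Finset.sum_congr rfl
      intro i _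
      rw [intervalIntegral.integral_const_mul]
  have hstep3 : ∑ i ∈ F, J i * (∫ t in (0:ℝ)..M,
      (Set.Ico (s i - h - r) (s i - r)).indicator (fun _ => (1:ℝ)) t) ≤ (∑ i ∈ F, J i) * h := by
    rw [Finset.sum_mul]
    apply Finset.sum_le_sum
    intro i _
    exact mul_le_mul_of_nonneg_left (hindle i) (hJ0 i)
  have hchM : c * h * M ≤ c * h * T := by
    apply mul_le_mul_of_nonneg_left (by simp only [hM]; linarith) (by positivity)
  have hfinal : (∑ i ∈ F, J i) * h ≤ (2 * wstar + chat * T) * h :=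
    mul_le_mul_of_nonneg_right hsumJ hh.le
  have hhD : h * D ≤ ε := by
    calc h * D ≤ (ε / D) * D := mul_le_mul_of_nonneg_right hhη hDpos.le
      _ = ε := div_mul_cancel₀ ε hDpos.ne'
  calc (∫ t in (0:ℝ)..M, |w (r + t) - w (r + t + h)|)
      ≤ c * h * M + ∑ i ∈ F, J i * ∫ t in (0:ℝ)..M,
          (Set.Ico (s i - h - r) (s i - r)).indicator (fun _ => (1:ℝ)) t := by
        rw [← hstep2]; exact hstep1
    _ ≤ c * h * T + (2 * wstar + chat * T) * h := by linarith
    _ = h * D := by simp only [hD]; ring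
    _ ≤ ε := hhD
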